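/- A subset A of ℓ^p (1 ≤ p < ∞) consisting of weakly decreasing nonnegative sequences is precompact (totally bounded) in ℓ^p if and only if A is bounded in the ℓ^p norm and for every ε > 0 there exists δ > 0 such that sup_{x ∈ A} ∑_{i : x_i ≤ δ} x_i^p ≤ ε. -/

import Mathlib

open scoped ENNReal

namespace Stmt15Aux

noncomputable section

variable {p : ℝ≥0∞} [hp : Fact (1 ≤ p)]

lemma pr_pos (hp' : p ≠ ∞) : 0 < p.toReal :=
  ENNReal.toReal_pos (zero_lt_one.trans_le hp.out).ne' hp'

/-- Zero out the first `N` coordinates. -/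
def Q (hp' : p ≠ ∞) (N : ℕ) (x : lp (fun _ : ℕ => ℝ) p) : lp (fun _ : ℕ => ℝ) p :=
  ⟨fun i => if i < N then 0 else x i, memℓp_gen <| by
    refine ((lp.memℓp x).summable (pr_pos hp')).of_nonneg_of_le
      (fun i => Real.rpow_nonneg (norm_nonneg _) _) (fun i => ?_)
    by_cases h : i < N
    · simp only [if_pos h, norm_zero, Real.zero_rpow (pr_pos hp').ne']
      positivity
    · simp [h]⟩

@[simp] lemma Q_apply (hp' : p ≠ ∞) (N : ℕ) (x : lp (fun _ : ℕ => ℝ) p) (i : ℕ) :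
    (Q hp' N x : ∀ _ : ℕ, ℝ) i = if i < N then 0 else x i := rfl

lemma Q_sub (hp' : p ≠ ∞) (N : ℕ) (x y : lp (fun _ : ℕ => ℝ) p) :
    Q hp' N (x - y) = Q hp' N x - Q hp' N y := by
  apply lp.ext
  funext i
  by_cases h : i < N <;> simp [h]

lemma tsum_Q_eq (hp' : p ≠ ∞) (N : ℕ) (x : lp (fun _ : ℕ => ℝ) p) :
    (∑' i, ‖(Q hp' N x : ∀ _ : ℕ, ℝ) i‖ ^ p.toReal)
      = (∑' i, ‖(x : ∀ _ : ℕ, ℝ) i‖ ^ p.toReal)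
        - ∑ i ∈ Finset.range N, ‖(x : ∀ _ : ℕ, ℝ) i‖ ^ p.toReal := by
  have hx := (lp.memℓp x).summable (pr_pos hp')
  have hQ := (lp.memℓp (Q hp' N x)).summable (pr_pos hp')
  have hhead : Summable fun i => if i < N then ‖(x : ∀ _ : ℕ, ℝ) i‖ ^ p.toReal else 0 := by
    apply summable_of_ne_finset_zero (s := Finset.range N)
    intro i hi
    simp [Finset.mem_range.not.mp hi]
  have key : (∑' i, ‖(x : ∀ _ : ℕ, ℝ) i‖ ^ p.toReal)
      = (∑' i, if i < N then ‖(x : ∀ _ : ℕ, ℝ) i‖ ^ p.toReal else 0)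
        + ∑' i, ‖(Q hp' N x : ∀ _ : ℕ, ℝ) i‖ ^ p.toReal := by
    rw [← Summable.tsum_add hhead hQ]
    apply tsum_congr
    intro i
    by_cases h : i < N <;>
      simp [h, Real.zero_rpow (pr_pos hp').ne']
  have hsum : (∑' i, if i < N then ‖(x : ∀ _ : ℕ, ℝ) i‖ ^ p.toReal else 0)
      = ∑ i ∈ Finset.range N, ‖(x : ∀ _ : ℕ, ℝ) i‖ ^ p.toReal := by
    rw [tsum_eq_sum (s := Finset.range N) (fun i hi => by
      simp [Finset.mem_range.not.mp hi])]
    exact Finset.sum_congr rfl fun i hi => by simp [Finset.mem_range.mp hi]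
  rw [key, hsum]
  ring

lemma norm_Q_rpow (hp' : p ≠ ∞) (N : ℕ) (x : lp (fun _ : ℕ => ℝ) p) :
    ‖Q hp' N x‖ ^ p.toReal = ∑' i, ‖(Q hp' N x : ∀ _ : ℕ, ℝ) i‖ ^ p.toReal :=
  lp.norm_rpow_eq_tsum (pr_pos hp') _

lemma norm_Q_le (hp' : p ≠ ∞) (N : ℕ) (x : lp (fun _ : ℕ => ℝ) p) :
    ‖Q hp' N x‖ ≤ ‖x‖ := by
  apply lp.norm_le_of_tsum_le (pr_pos hp') (norm_nonneg x)
  rw [lp.norm_rpow_eq_tsum (pr_pos hp') x]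
  refine Summable.tsum_le_tsum (fun i => ?_) ((lp.memℓp _).summable (pr_pos hp'))
    ((lp.memℓp x).summable (pr_pos hp'))
  by_cases h : i < N
  · simp only [Q_apply, if_pos h, norm_zero, Real.zero_rpow (pr_pos hp').ne']
    positivity
  · simp [h]

lemma norm_Q_anti (hp' : p ≠ ∞) (x : lp (fun _ : ℕ => ℝ) p) {m n : ℕ} (h : m ≤ n) :
    ‖Q hp' n x‖ ≤ ‖Q hp' m x‖ := by
  apply lp.norm_le_of_tsum_le (pr_pos hp') (norm_nonneg _)
  rw [lp.norm_rpow_eq_tsum (pr_pos hp')]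
  refine Summable.tsum_le_tsum (fun i => ?_) ((lp.memℓp _).summable (pr_pos hp'))
    ((lp.memℓp _).summable (pr_pos hp'))
  by_cases hn : i < n
  · simp only [Q_apply, if_pos hn, norm_zero, Real.zero_rpow (pr_pos hp').ne']
    positivity
  · have hm : ¬ i < m := fun hc => hn (hc.trans_le h)
    simp [hn, hm]

lemma exists_tail_small (hp' : p ≠ ∞) (x : lp (fun _ : ℕ => ℝ) p) {c : ℝ} (hc : 0 < c) :
    ∃ N : ℕ, ‖Q hp' N x‖ ≤ c := by
  have hx := (lp.memℓp x).summable (pr_pos hp')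
  have hpow : (0 : ℝ) < c ^ p.toReal := Real.rpow_pos_of_pos hc _
  have hev : ∀ᶠ n in Filter.atTop,
      (∑' i, ‖(x : ∀ _ : ℕ, ℝ) i‖ ^ p.toReal) - c ^ p.toReal
        < ∑ i ∈ Finset.range n, ‖(x : ∀ _ : ℕ, ℝ) i‖ ^ p.toReal :=
    hx.hasSum.tendsto_sum_nat.eventually (eventually_gt_nhds (by linarith))
  obtain ⟨N, hN⟩ := hev.exists
  refine ⟨N, ?_⟩
  apply lp.norm_le_of_tsum_le (pr_pos hp') hc.le
  rw [tsum_Q_eq hp']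
  linarith

/-- Extension by zero of a finite vector. -/
def ext0 (hp' : p ≠ ∞) (N : ℕ) (v : Fin N → ℝ) : lp (fun _ : ℕ => ℝ) p :=
  ⟨fun i => if h : i < N then v ⟨i, h⟩ else 0, memℓp_gen <| by
    apply summable_of_ne_finset_zero (s := Finset.range N)
    intro i hi
    have : ¬ i < N := Finset.mem_range.not.mp hi
    simp [this, Real.zero_rpow (pr_pos hp').ne']⟩

@[simp] lemma ext0_apply (hp' : p ≠ ∞) (N : ℕ) (v : Fin N → ℝ) (i : ℕ) :
    (ext0 hp' N v : ∀ _ : ℕ, ℝ) i = if h : i < N then v ⟨i, h⟩ else 0 := rfl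

/-- `ext0` as a linear map. -/
def ext0L (hp' : p ≠ ∞) (N : ℕ) : (Fin N → ℝ) →ₗ[ℝ] lp (fun _ : ℕ => ℝ) p where
  toFun := ext0 hp' N
  map_add' v w := by
    apply lp.ext
    funext i
    by_cases h : i < N <;> simp [h]
  map_smul' c v := by
    apply lp.ext
    funext i
    by_cases h : i < N <;> simp [h]

lemma ext0_sub_eq (hp' : p ≠ ∞) (N : ℕ) (x : lp (fun _ : ℕ => ℝ) p) :
    ext0 hp' N (fun j : Fin N => (x : ∀ _ : ℕ, ℝ) j) - x = -(Q hp' N x) := by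
  apply lp.ext
  funext i
  by_cases h : i < N <;> simp [h]

end

end Stmt15Aux

open Stmt15Aux

theorem stmt15 (p : ℝ≥0∞) [hp : Fact (1 ≤ p)] (hp' : p ≠ ∞)
    (A : Set (lp (fun _ : ℕ => ℝ) p))
    (hmono : ∀ x ∈ A, Antitone (fun i : ℕ => (x : ∀ _ : ℕ, ℝ) i))
    (hpos : ∀ x ∈ A, ∀ i : ℕ, 0 ≤ (x : ∀ _ : ℕ, ℝ) i) :
    TotallyBounded A ↔
      ((∃ C : ℝ, ∀ x ∈ A, ‖x‖ ≤ C) ∧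
        ∀ ε > (0 : ℝ), ∃ δ > (0 : ℝ), ∀ x ∈ A,
          (∑' i : ℕ, if (x : ∀ _ : ℕ, ℝ) i ≤ δ
            then ((x : ∀ _ : ℕ, ℝ) i) ^ p.toReal else 0) ≤ ε) := by
  have hpr : 0 < p.toReal := pr_pos hp'
  constructor
  · intro htb
    constructor
    · obtain ⟨r, hr⟩ := htb.isBounded.subset_closedBall 0
      exact ⟨r, fun x hx => by simpa using hr hx⟩
    · intro ε hε
      set η : ℝ := (ε / 2) ^ (1 / p.toReal) / 2 with hη_def
      have hη : 0 < η := by positivity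
      obtain ⟨t, htfin, hcover⟩ := Metric.totallyBounded_iff.mp htb η hη
      choose! Nf hNf using fun y : lp (fun _ : ℕ => ℝ) p => exists_tail_small hp' y hη
      set N : ℕ := htfin.toFinset.sup Nf with hN_def
      -- uniform tail bound
      have tail_bound : ∀ x ∈ A, ‖Q hp' N x‖ ^ p.toReal ≤ ε / 2 := by
        intro x hx
        obtain ⟨y, hyt, hxy⟩ := Set.mem_iUnion₂.mp (hcover hx)
        have hxy' : ‖x - y‖ < η := by rwa [Metric.mem_ball, dist_eq_norm] at hxy
        have hQx : Q hp' N x = Q hp' N (x - y) + Q hp' N y := by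
          rw [Q_sub]; abel
        have h1 : ‖Q hp' N x‖ ≤ ‖Q hp' N (x - y)‖ + ‖Q hp' N y‖ := by
          rw [hQx]; exact norm_add_le _ _
        have h2 : ‖Q hp' N (x - y)‖ ≤ η := (norm_Q_le hp' N _).trans hxy'.le
        have h3 : ‖Q hp' N y‖ ≤ η := by
          refine le_trans (norm_Q_anti hp' y ?_) (hNf y)
          exact Finset.le_sup (htfin.mem_toFinset.mpr hyt)
        have h4 : ‖Q hp' N x‖ ≤ (ε / 2) ^ (1 / p.toReal) := by
          calc ‖Q hp' N x‖ ≤ η + η := by linarith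
            _ = (ε / 2) ^ (1 / p.toReal) := by rw [hη_def]; ring
        calc ‖Q hp' N x‖ ^ p.toReal
            ≤ ((ε / 2) ^ (1 / p.toReal)) ^ p.toReal := by
              exact Real.rpow_le_rpow (norm_nonneg _) h4 hpr.le
          _ = ε / 2 := by
              rw [← Real.rpow_mul (by positivity), one_div_mul_cancel hpr.ne',
                Real.rpow_one]
      -- choose δ
      refine ⟨(ε / (2 * (N + 1))) ^ (1 / p.toReal), by positivity, fun x hx => ?_⟩
      set δ : ℝ := (ε / (2 * (N + 1))) ^ (1 / p.toReal) with hδ_def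
      have hδpow : δ ^ p.toReal = ε / (2 * (N + 1)) := by
        rw [hδ_def, ← Real.rpow_mul (by positivity), one_div_mul_cancel hpr.ne',
          Real.rpow_one]
      have hδpos : 0 < δ := by rw [hδ_def]; positivity
      have hhead : Summable fun i => if i < N then δ ^ p.toReal else 0 := by
        apply summable_of_ne_finset_zero (s := Finset.range N)
        intro i hi
        simp [Finset.mem_range.not.mp hi]
      have hQsum := (lp.memℓp (Q hp' N x)).summable hpr
      have hptle : ∀ i : ℕ, (if (x : ∀ _ : ℕ, ℝ) i ≤ δ then ((x : ∀ _ : ℕ, ℝ) i) ^ p.toReal else 0)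
          ≤ (if i < N then δ ^ p.toReal else 0)
            + ‖(Q hp' N x : ∀ _ : ℕ, ℝ) i‖ ^ p.toReal := by
        intro i
        by_cases h : i < N
        · simp only [Q_apply, if_pos h, norm_zero, Real.zero_rpow hpr.ne', add_zero]
          by_cases hle : (x : ∀ _ : ℕ, ℝ) i ≤ δ
          · simp only [if_pos hle]
            exact Real.rpow_le_rpow (hpos x hx i) hle hpr.le
          · simp only [if_neg hle]
            exact Real.rpow_nonneg hδpos.le _
        · simp only [Q_apply, if_neg h, zero_add]
          rw [Real.norm_of_nonneg (hpos x hx i)]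
          by_cases hle : (x : ∀ _ : ℕ, ℝ) i ≤ δ
          · simp [hle]
          · simp only [if_neg hle]
            exact Real.rpow_nonneg (hpos x hx i) _
      have hsum_rhs : Summable fun i =>
          (if i < N then δ ^ p.toReal else 0)
            + ‖(Q hp' N x : ∀ _ : ℕ, ℝ) i‖ ^ p.toReal := hhead.add hQsum
      have hsum_lhs : Summable fun i =>
          if (x : ∀ _ : ℕ, ℝ) i ≤ δ then ((x : ∀ _ : ℕ, ℝ) i) ^ p.toReal else 0 := by
        refine hsum_rhs.of_nonneg_of_le (fun i => ?_) hptle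
        by_cases hle : (x : ∀ _ : ℕ, ℝ) i ≤ δ
        · simp only [if_pos hle]
          exact Real.rpow_nonneg (hpos x hx i) _
        · simp [hle]
      have hheadsum : (∑' i, if i < N then δ ^ p.toReal else 0) = N * δ ^ p.toReal := by
        rw [tsum_eq_sum (s := Finset.range N) (fun i hi => by
          simp [Finset.mem_range.not.mp hi])]
        rw [Finset.sum_congr rfl (fun i hi => if_pos (Finset.mem_range.mp hi)),
          Finset.sum_const, Finset.card_range, nsmul_eq_mul]
      calc (∑' i : ℕ, if (x : ∀ _ : ℕ, ℝ) i ≤ δ then ((x : ∀ _ : ℕ, ℝ) i) ^ p.toReal else 0)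
          ≤ ∑' i, ((if i < N then δ ^ p.toReal else 0)
              + ‖(Q hp' N x : ∀ _ : ℕ, ℝ) i‖ ^ p.toReal) :=
            Summable.tsum_le_tsum hptle hsum_lhs hsum_rhs
        _ = N * δ ^ p.toReal + ‖Q hp' N x‖ ^ p.toReal := by
            rw [Summable.tsum_add hhead hQsum, hheadsum, norm_Q_rpow]
        _ ≤ N * (ε / (2 * (N + 1))) + ε / 2 := by
            rw [hδpow]; exact add_le_add le_rfl (tail_bound x hx)
        _ ≤ ε := by
            have h1 : (N : ℝ) * (ε / (2 * (N + 1))) ≤ ((N : ℝ) + 1) * (ε / (2 * (N + 1))) := by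
              have : (0:ℝ) ≤ ε / (2 * ((N:ℝ) + 1)) := by positivity
              nlinarith [this]
            have h2 : ((N : ℝ) + 1) * (ε / (2 * (N + 1))) = ε / 2 := by
              field_simp
            linarith
  · rintro ⟨⟨C, hC⟩, htail⟩
    rw [Metric.totallyBounded_iff]
    intro ε hε
    set C' : ℝ := max C 0 with hC'_def
    have hC' : ∀ x ∈ A, ‖x‖ ≤ C' := fun x hx => (hC x hx).trans (le_max_left _ _)
    have hC'0 : 0 ≤ C' := le_max_right _ _
    obtain ⟨δ, hδ, hδA⟩ := htail ((ε / 3) ^ p.toReal) (by positivity)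
    set N : ℕ := Nat.ceil (C' ^ p.toReal / δ ^ p.toReal) + 1 with hN_def
    -- all coordinates past N are ≤ δ
    have key : ∀ x ∈ A, ∀ i : ℕ, N ≤ i → (x : ∀ _ : ℕ, ℝ) i ≤ δ := by
      intro x hx i hi
      by_contra hlt
      push_neg at hlt
      have hterm : ∀ j ∈ Finset.range (i + 1), δ ^ p.toReal ≤ ‖(x : ∀ _ : ℕ, ℝ) j‖ ^ p.toReal := by
        intro j hj
        have hji : j ≤ i := Nat.lt_succ_iff.mp (Finset.mem_range.mp hj)
        have : δ ≤ (x : ∀ _ : ℕ, ℝ) j := (hlt.le).trans (hmono x hx hji)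
        rw [Real.norm_of_nonneg (hpos x hx j)]
        exact Real.rpow_le_rpow hδ.le this hpr.le
      have h1 : ((i : ℝ) + 1) * δ ^ p.toReal
          ≤ ∑ j ∈ Finset.range (i + 1), ‖(x : ∀ _ : ℕ, ℝ) j‖ ^ p.toReal := by
        calc ((i : ℝ) + 1) * δ ^ p.toReal
            = ∑ _j ∈ Finset.range (i + 1), δ ^ p.toReal := by
              rw [Finset.sum_const, Finset.card_range, nsmul_eq_mul]
              push_cast; ring
          _ ≤ _ := Finset.sum_le_sum hterm
      have h2 : ∑ j ∈ Finset.range (i + 1), ‖(x : ∀ _ : ℕ, ℝ) j‖ ^ p.toReal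
          ≤ ‖x‖ ^ p.toReal := lp.sum_rpow_le_norm_rpow hpr x _
      have h3 : ‖x‖ ^ p.toReal ≤ C' ^ p.toReal :=
        Real.rpow_le_rpow (norm_nonneg _) (hC' x hx) hpr.le
      have hδp : 0 < δ ^ p.toReal := Real.rpow_pos_of_pos hδ _
      have hceil : C' ^ p.toReal / δ ^ p.toReal ≤ (Nat.ceil (C' ^ p.toReal / δ ^ p.toReal) : ℝ) :=
        Nat.le_ceil _
      have hNi : (N : ℝ) ≤ (i : ℝ) := Nat.cast_le.mpr hi
      have hNval : (Nat.ceil (C' ^ p.toReal / δ ^ p.toReal) : ℝ) + 1 = (N : ℝ) := by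
        rw [hN_def]; push_cast; ring
      have : C' ^ p.toReal < ((i : ℝ) + 1) * δ ^ p.toReal := by
        have hlt2 : C' ^ p.toReal / δ ^ p.toReal < (i : ℝ) + 1 := by
          calc C' ^ p.toReal / δ ^ p.toReal
              ≤ (Nat.ceil (C' ^ p.toReal / δ ^ p.toReal) : ℝ) := hceil
            _ < (i : ℝ) + 1 := by rw [← hNval] at hNi; linarith
        calc C' ^ p.toReal = (C' ^ p.toReal / δ ^ p.toReal) * δ ^ p.toReal := by
              field_simp
          _ < ((i : ℝ) + 1) * δ ^ p.toReal := by
              exact mul_lt_mul_of_pos_right hlt2 hδp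
      linarith
    -- uniform tail bound in norm
    have tailb : ∀ x ∈ A, ‖Q hp' N x‖ ≤ ε / 3 := by
      intro x hx
      apply lp.norm_le_of_tsum_le hpr (by positivity)
      have hptle : ∀ i : ℕ, ‖(Q hp' N x : ∀ _ : ℕ, ℝ) i‖ ^ p.toReal
          ≤ (if (x : ∀ _ : ℕ, ℝ) i ≤ δ then ((x : ∀ _ : ℕ, ℝ) i) ^ p.toReal else 0) := by
        intro i
        by_cases h : i < N
        · simp only [Q_apply, if_pos h, norm_zero, Real.zero_rpow hpr.ne']
          by_cases hle : (x : ∀ _ : ℕ, ℝ) i ≤ δ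
          · simp only [if_pos hle]
            exact Real.rpow_nonneg (hpos x hx i) _
          · simp [hle]
        · have hle : (x : ∀ _ : ℕ, ℝ) i ≤ δ := key x hx i (le_of_not_gt h)
          simp only [Q_apply, if_neg h, if_pos hle,
            Real.norm_of_nonneg (hpos x hx i), le_refl]
      have hsum_rhs : Summable fun i =>
          if (x : ∀ _ : ℕ, ℝ) i ≤ δ then ((x : ∀ _ : ℕ, ℝ) i) ^ p.toReal else 0 := by
        refine ((lp.memℓp x).summable hpr).of_nonneg_of_le (fun i => ?_) (fun i => ?_)
        · by_cases hle : (x : ∀ _ : ℕ, ℝ) i ≤ δ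
          · simp only [if_pos hle]
            exact Real.rpow_nonneg (hpos x hx i) _
          · simp [hle]
        · by_cases hle : (x : ∀ _ : ℕ, ℝ) i ≤ δ
          · simp only [if_pos hle, Real.norm_of_nonneg (hpos x hx i), le_refl]
          · simp only [if_neg hle]
            positivity
      calc (∑' i, ‖(Q hp' N x : ∀ _ : ℕ, ℝ) i‖ ^ p.toReal)
          ≤ ∑' i, (if (x : ∀ _ : ℕ, ℝ) i ≤ δ then ((x : ∀ _ : ℕ, ℝ) i) ^ p.toReal else 0) :=
            Summable.tsum_le_tsum hptle ((lp.memℓp _).summable hpr) hsum_rhs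
        _ ≤ (ε / 3) ^ p.toReal := hδA x hx
    -- finite-dimensional part
    have hπb : (fun x : lp (fun _ : ℕ => ℝ) p => fun j : Fin N => (x : ∀ _ : ℕ, ℝ) j) '' A
        ⊆ Metric.closedBall 0 C' := by
      rintro v ⟨x, hx, rfl⟩
      rw [Metric.mem_closedBall, dist_zero_right]
      refine (pi_norm_le_iff_of_nonneg hC'0).mpr fun j => ?_
      exact (lp.norm_apply_le_norm (zero_lt_one.trans_le hp.out).ne' x j).trans (hC' x hx)
    have htb1 : TotallyBounded
        ((fun x : lp (fun _ : ℕ => ℝ) p => fun j : Fin N => (x : ∀ _ : ℕ, ℝ) j) '' A) :=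
      (isCompact_closedBall (0 : Fin N → ℝ) C').totallyBounded.subset hπb
    let L : (Fin N → ℝ) →L[ℝ] lp (fun _ : ℕ => ℝ) p :=
      LinearMap.toContinuousLinearMap (ext0L hp' N)
    have htb2 : TotallyBounded (L ''
        ((fun x : lp (fun _ : ℕ => ℝ) p => fun j : Fin N => (x : ∀ _ : ℕ, ℝ) j) '' A)) :=
      htb1.image L.uniformContinuous
    obtain ⟨t, htfin, hcover⟩ := Metric.totallyBounded_iff.mp htb2 (ε / 3) (by positivity)
    refine ⟨t, htfin, fun x hx => ?_⟩
    have hmem : L (fun j : Fin N => (x : ∀ _ : ℕ, ℝ) j) ∈ L ''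
        ((fun x : lp (fun _ : ℕ => ℝ) p => fun j : Fin N => (x : ∀ _ : ℕ, ℝ) j) '' A) :=
      ⟨_, ⟨x, hx, rfl⟩, rfl⟩
    obtain ⟨y, hyt, hy⟩ := Set.mem_iUnion₂.mp (hcover hmem)
    rw [Metric.mem_ball] at hy
    refine Set.mem_iUnion₂.mpr ⟨y, hyt, ?_⟩
    rw [Metric.mem_ball]
    have hLx : L (fun j : Fin N => (x : ∀ _ : ℕ, ℝ) j)
        = ext0 hp' N (fun j : Fin N => (x : ∀ _ : ℕ, ℝ) j) := rfl
    have hdist : dist x (L (fun j : Fin N => (x : ∀ _ : ℕ, ℝ) j)) ≤ ε / 3 := by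
      rw [dist_eq_norm, hLx, ← norm_neg, neg_sub, ext0_sub_eq hp' N x, norm_neg]
      exact tailb x hx
    calc dist x y ≤ dist x (L (fun j : Fin N => (x : ∀ _ : ℕ, ℝ) j))
          + dist (L (fun j : Fin N => (x : ∀ _ : ℕ, ℝ) j)) y := dist_triangle _ _ _
      _ < ε / 3 + ε / 3 := by linarith
      _ < ε := by linarith
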